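/- Starvation freedom for the centralised N Diners: under the polled dynamics with the invariants (D acyclic, eaters are sinks, hungry dominate thinkers, safety) and the assumption that every eating session lasts finitely many steps, every hungry vertex eventually eats: if ā[i](j) = h then there exists i' > i with ā[i'](j) = e. -/

import Mathlib

inductive Act : Type
  | t | h | e
deriving DecidableEq, Repr

def switch : Act → Act
  | Act.t => Act.h
  | Act.h => Act.e
  | Act.e => Act.t

def fP (a : Act) (b : Bool) : Act := if b then switch a else a

inductive Cmd : Type
  | pass | force (b : Bool)
deriving DecidableEq

def fS (a : Act) (b : Bool) : Cmd → Act
  | Cmd.pass => fP a b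
  | Cmd.force b' => fP a b'

/-- The updated priority relation `dH D a`: edge `j ↦ k` of `D` is reversed when
`a j = e`, or when `a j = t` and `a k = h`; otherwise kept. -/
def dH {V : Type*} (D : V → V → Prop) (a : V → Act) : V → V → Prop :=
  fun j k =>
    (D j k ∧ ¬ (a j = Act.e ∨ (a j = Act.t ∧ a k = Act.h))) ∨
    (D k j ∧ (a k = Act.e ∨ (a k = Act.t ∧ a j = Act.h)))

/-- `D` is a priority map for `E`: it orients each edge of `E` exactly one way. -/
def IsPriorityMap {V : Type*} (E D : V → V → Prop) : Prop :=
  (∀ j k, D j k → E j k) ∧ (∀ j k, E j k → (D j k ↔ ¬ D k j))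

def topD {V : Type*} (E D : V → V → Prop) (j : V) : Prop := ∀ k, E j k → D j k

def ready {V : Type*} (E D : V → V → Prop) (a : V → Act) (j : V) : Prop :=
  a j = Act.h ∧ topD E D j ∧ ∀ k, E j k → a k ≠ Act.e

open scoped Classical in
noncomputable def gH {V : Type*} (E D : V → V → Prop) (a : V → Act) (j : V) : Cmd :=
  if a j = Act.t ∨ a j = Act.e then Cmd.pass
  else if ready E D a j then Cmd.force true else Cmd.force false

/-- One step of the polled dynamics of the philosophers under the hub controller. -/
noncomputable def nextA {V : Type*} (E D : V → V → Prop) (a : V → Act) (b : V → Bool) :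
    V → Act :=
  fun j => fS (a j) (b j) (gH E D a j)

def safe {V : Type*} (E : V → V → Prop) (a : V → Act) : Prop :=
  ∀ j k, E j k → ¬ (a j = Act.e ∧ a k = Act.e)

def Acyclic {V : Type*} (D : V → V → Prop) : Prop :=
  ∀ j, ¬ Relation.TransGen D j j

namespace SF

variable {V : Type*}

lemma step_t (E D : V → V → Prop) (a : V → Act) (b : V → Bool) (j : V)
    (hj : a j = Act.t) : nextA E D a b j = if b j then Act.h else Act.t := by
  simp [nextA, gH, hj, fS, fP, switch]

lemma step_e (E D : V → V → Prop) (a : V → Act) (b : V → Bool) (j : V)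
    (hj : a j = Act.e) : nextA E D a b j = if b j then Act.t else Act.e := by
  simp [nextA, gH, hj, fS, fP, switch]

lemma step_h_ready (E D : V → V → Prop) (a : V → Act) (b : V → Bool) (j : V)
    (hj : a j = Act.h) (hr : ready E D a j) :
    nextA E D a b j = Act.e := by
  simp [nextA, gH, hj, hr, fS, fP, switch]

lemma step_h_not_ready (E D : V → V → Prop) (a : V → Act) (b : V → Bool) (j : V)
    (hj : a j = Act.h) (hr : ¬ ready E D a j) :
    nextA E D a b j = Act.h := by
  simp [nextA, gH, hj, hr, fS, fP, switch]

/-- A vertex that is eating after a step was eating before, or was hungry and ready. -/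
lemma eat_src (E D : V → V → Prop) (a : V → Act) (b : V → Bool) (j : V)
    (hj : nextA E D a b j = Act.e) :
    a j = Act.e ∨ (a j = Act.h ∧ ready E D a j) := by
  rcases ha : a j with h1 | h1 | h1
  · rw [step_t E D a b j ha] at hj
    split at hj <;> simp_all
  · by_cases hr : ready E D a j
    · exact Or.inr ⟨rfl, hr⟩
    · rw [step_h_not_ready E D a b j ha hr] at hj; simp_all
  · exact Or.inl rfl

lemma safe_step (E D : V → V → Prop) (a : V → Act) (b : V → Bool)
    (hsymm : ∀ j k, E j k → E k j)
    (hpm : IsPriorityMap E D) (hsafe : safe E a) :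
    safe E (nextA E D a b) := by
  intro j k hE ⟨hje, hke⟩
  rcases eat_src E D a b j hje with hj | ⟨hjh, _, hjt, hjn⟩
  · rcases eat_src E D a b k hke with hk | ⟨hkh, _, hkt, hkn⟩
    · exact hsafe j k hE ⟨hj, hk⟩
    · exact hkn j (hsymm j k hE) hj
  · rcases eat_src E D a b k hke with hk | ⟨hkh, _, hktop, hkn⟩
    · exact hjn k hE hk
    · have h1 := hjt k hE
      have h2 := hktop j (hsymm j k hE)
      exact ((hpm.2 j k hE).1 h1) h2

lemma pm_step (E D : V → V → Prop) (a : V → Act)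
    (hsymm : ∀ j k, E j k → E k j) (hpm : IsPriorityMap E D) :
    IsPriorityMap E (dH D a) := by
  constructor
  · intro j k hjk
    rcases hjk with ⟨h, _⟩ | ⟨h, _⟩
    · exact hpm.1 j k h
    · exact hsymm k j (hpm.1 k j h)
  · intro j k hE
    have h1 := hpm.2 j k hE
    have h2 := hpm.2 k j (hsymm j k hE)
    unfold dH
    tauto

/-- eaters have no outgoing edges in the updated priority map -/
lemma eat_no_out (E D : V → V → Prop) (a : V → Act)
    (hsymm : ∀ j k, E j k → E k j)
    (hpm : IsPriorityMap E D) (hsafe : safe E a) (j k : V)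
    (hj : a j = Act.e) : ¬ dH D a j k := by
  rintro (⟨hD, hC⟩ | ⟨hD, hC⟩)
  · exact hC (Or.inl hj)
  · rcases hC with hke | ⟨hkt, _⟩
    · exact hsafe k j (hpm.1 k j hD) ⟨hke, hj⟩
    · rw [hj] at *; simp_all

lemma sink_step (E D : V → V → Prop) (a : V → Act)
    (hsymm : ∀ j k, E j k → E k j)
    (hpm : IsPriorityMap E D) (hsafe : safe E a) (j k : V)
    (hj : a j = Act.e) (hE : E j k) : dH D a k j := by
  have h1 : ¬ dH D a j k := eat_no_out E D a hsymm hpm hsafe j k hj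
  have h2 := (pm_step E D a hsymm hpm).2 k j (hsymm j k hE)
  exact h2.mpr h1

lemma ht_step (E D : V → V → Prop) (a : V → Act)
    (hsymm : ∀ j k, E j k → E k j)
    (hpm : IsPriorityMap E D) (j k : V)
    (hj : a j = Act.h) (hk : a k = Act.t) (hE : E j k) : dH D a j k := by
  have h1 : ¬ dH D a k j := by
    rintro (⟨hD, hC⟩ | ⟨hD, hC⟩)
    · exact hC (Or.inr ⟨hk, hj⟩)
    · simp_all
  have h2 := (pm_step E D a hsymm hpm).2 j k hE
  exact h2.mpr h1

lemma edge_classify (E D : V → V → Prop) (a : V → Act) (x y : V)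
    (hxy : dH D a x y) (hx : a x ≠ Act.e) (hy : a y ≠ Act.e) :
    (a x = Act.h ∧ a y = Act.t) ∨ (D x y ∧ a x = a y) := by
  rcases hxy with ⟨hD, hC⟩ | ⟨hD, hC⟩
  · rcases hax : a x with h1 | h1 | h1 <;> rcases hay : a y with h2 | h2 | h2 <;> simp_all
  · rcases hC with h | ⟨h1, h2⟩
    · exact absurd h hy
    · exact Or.inl ⟨h2, h1⟩

lemma acyclic_step (E D : V → V → Prop) (a : V → Act)
    (hsymm : ∀ j k, E j k → E k j)
    (hpm : IsPriorityMap E D) (hsafe : safe E a) (hacyc : Acyclic D) :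
    Acyclic (dH D a) := by
  have key : ∀ x y, Relation.TransGen (dH D a) x y → a y ≠ Act.e →
      (a x = Act.h ∧ a y = Act.t) ∨ (a x = a y ∧ Relation.TransGen D x y) := by
    intro x y hxy
    induction hxy with
    | single h =>
      intro hy
      have hx : a x ≠ Act.e := fun hx => eat_no_out E D a hsymm hpm hsafe _ _ hx h
      rcases edge_classify E D a _ _ h hx hy with h1 | ⟨h1, h2⟩
      · exact Or.inl h1
      · exact Or.inr ⟨h2, Relation.TransGen.single h1⟩
    | tail hxb hedge ih =>
      rename_i bb c
      intro hc
      have hb : a bb ≠ Act.e := fun hb => eat_no_out E D a hsymm hpm hsafe _ _ hb hedge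
      rcases edge_classify E D a _ _ hedge hb hc with ⟨h1, h2⟩ | ⟨h1, h2⟩
      · -- a bb = h, a c = t
        rcases ih hb with ⟨h3, h4⟩ | ⟨h3, h4⟩
        · rw [h4] at h1; simp_all
        · rw [h1] at h3; exact Or.inl ⟨h3, h2⟩
      · -- D bb c, a bb = a c
        rcases ih hb with ⟨h3, h4⟩ | ⟨h3, h4⟩
        · rw [h2] at h4; exact Or.inl ⟨h3, h4⟩
        · exact Or.inr ⟨h3.trans h2, h4.tail h1⟩
  have exists_out : ∀ x y : V, Relation.TransGen (dH D a) x y → ∃ z, dH D a x z := by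
    intro x y hxy
    induction hxy with
    | single h => exact ⟨_, h⟩
    | tail _ _ ih => exact ih
  intro j hcyc
  obtain ⟨z, hz⟩ := exists_out j j hcyc
  have hj : a j ≠ Act.e := fun hj => eat_no_out E D a hsymm hpm hsafe _ _ hj hz
  rcases key j j hcyc hj with ⟨h1, h2⟩ | ⟨_, h2⟩
  · rw [h1] at h2; simp_all
  · exact hacyc j h2

end SF

namespace SF
section Main
variable {N : ℕ} {E : Fin N → Fin N → Prop}
  {A : ℕ → Fin N → Act} {Ds : ℕ → Fin N → Fin N → Prop} {b : ℕ → Fin N → Bool}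
  (hE_irr : ∀ j, ¬ E j j) (hE_symm : ∀ j k, E j k → E k j)
  (hA0 : ∀ j, A 0 j = Act.t)
  (hD0 : ∀ j k, Ds 0 j k ↔ (E j k ∧ k < j))
  (hAstep : ∀ i, A (i + 1) = nextA E (Ds i) (A i) (b i))
  (hDstep : ∀ i, Ds (i + 1) = dH (Ds i) (A (i + 1)))
  (hfin : ∀ (j : Fin N) (i : ℕ), A i j = Act.e → ∃ i' > i, A i' j ≠ Act.e)

def Inv (i : ℕ) : Prop :=
  IsPriorityMap E (Ds i) ∧ Acyclic (Ds i) ∧ safe E (A i) ∧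
    (∀ j k, A i j = Act.e → E j k → Ds i k j) ∧
    (∀ j k, A i j = Act.h → A i k = Act.t → E j k → Ds i j k)

include hE_irr hE_symm hA0 hD0 hAstep hDstep in
lemma invariants : ∀ i, Inv (E := E) (A := A) (Ds := Ds) i := by
  intro i
  induction i with
  | zero =>
    refine ⟨⟨fun j k h => ((hD0 j k).1 h).1, ?_⟩, ?_, ?_, ?_, ?_⟩
    · intro j k hE
      have hne : j ≠ k := by rintro rfl; exact hE_irr j hE
      have hne' : (j : ℕ) ≠ (k : ℕ) := fun h => hne (Fin.ext h)
      simp only [hD0, hE, hE_symm j k hE, true_and, Fin.lt_def]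
      omega
    · intro j hc
      have h2 : Relation.TransGen (fun x y : Fin N => (y : ℕ) < (x : ℕ)) j j :=
        Relation.TransGen.mono (r := Ds 0) (p := fun x y : Fin N => (y : ℕ) < (x : ℕ))
          (by intro x y hxy; have := ((hD0 x y).1 hxy).2; exact this) j j hc
      have htr : Transitive (fun x y : Fin N => (y : ℕ) < (x : ℕ)) :=
        fun a c d h1 h2 => h2.trans h1
      haveI : IsTrans (Fin N) (fun x y : Fin N => (y : ℕ) < (x : ℕ)) := ⟨htr⟩
      rw [Relation.transGen_eq_self] at h2
      omega
    · intro j k _ hjk; rw [hA0 j] at hjk; exact absurd hjk.1 (by simp)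
    · intro j k hj; rw [hA0 j] at hj; simp at hj
    · intro j k hj; rw [hA0 j] at hj; simp at hj
  | succ i ih =>
    obtain ⟨hpm, hacyc, hsafe, _, _⟩ := ih
    have hsafe' : safe E (A (i + 1)) := by
      rw [hAstep i]; exact safe_step E (Ds i) (A i) (b i) hE_symm hpm hsafe
    have hpm' : IsPriorityMap E (Ds (i + 1)) := by
      rw [hDstep i]; exact pm_step E (Ds i) (A (i + 1)) hE_symm hpm
    refine ⟨hpm', ?_, hsafe', ?_, ?_⟩
    · rw [hDstep i]; exact acyclic_step E (Ds i) (A (i + 1)) hE_symm hpm hsafe' hacyc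
    · intro j k hj hE
      rw [hDstep i]; exact sink_step E (Ds i) (A (i + 1)) hE_symm hpm hsafe' j k hj hE
    · intro j k hj hk hE
      rw [hDstep i]; exact ht_step E (Ds i) (A (i + 1)) hE_symm hpm j k hj hk hE

include hAstep in
lemma hungry_persists (i : ℕ) (j : Fin N) (hj : A i j = Act.h)
    (hne : ∀ i' > i, A i' j ≠ Act.e) : ∀ i' ≥ i, A i' j = Act.h := by
  intro i' hi'
  induction i', hi' using Nat.le_induction with
  | base => exact hj
  | succ i'' hi'' ih =>
    rw [hAstep i'']
    by_cases hr : ready E (Ds i'') (A i'') j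
    · exfalso
      have he : A (i'' + 1) j = Act.e := by
        rw [hAstep i'']
        exact step_h_ready E (Ds i'') (A i'') (b i'') j ih hr
      exact hne (i'' + 1) (by omega) he
    · exact step_h_not_ready E (Ds i'') (A i'') (b i'') j ih hr

include hAstep hfin in
lemma eater_exits (i : ℕ) (k : Fin N) (hk : A i k = Act.e) :
    ∃ i' > i, A i' k = Act.t := by
  classical
  have hP : ∃ n, i < n ∧ A n k ≠ Act.e := by
    obtain ⟨i', hi', hne⟩ := hfin k i hk; exact ⟨i', hi', hne⟩
  have hn := Nat.find_spec hP
  set n := Nat.find hP with hndef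
  refine ⟨n, hn.1, ?_⟩
  have hprev : A (n - 1) k = Act.e := by
    rcases eq_or_lt_of_le (Nat.succ_le_of_lt hn.1) with h | h
    · have : n - 1 = i := by omega
      rw [this]; exact hk
    · have h2 := Nat.find_min hP (m := n - 1) (by omega)
      push_neg at h2
      exact h2 (by omega)
  have hn1 : n = (n - 1) + 1 := by omega
  have hne := hn.2
  rw [hn1, hAstep] at hne ⊢
  rw [step_e E (Ds (n-1)) (A (n-1)) (b (n-1)) k hprev] at hne ⊢
  rcases hb : b (n - 1) k <;> simp [hb] at hne ⊢

include hE_irr hE_symm hA0 hD0 hAstep hDstep hfin in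
lemma top_no_starve (i : ℕ) (j : Fin N) (hj : ∀ i' ≥ i, A i' j = Act.h)
    (htop : topD E (Ds i) j) : False := by
  classical
  have hinv := invariants hE_irr hE_symm hA0 hD0 hAstep hDstep
  -- j stays top
  have htop' : ∀ i' ≥ i, topD E (Ds i') j := by
    intro i' hi'
    induction i', hi' using Nat.le_induction with
    | base => exact htop
    | succ i'' hi'' ih =>
      intro m hEm
      rw [hDstep i'']
      left
      refine ⟨ih m hEm, ?_⟩
      rintro (he | ⟨ht, _⟩)
      · rw [hj (i'' + 1) (by omega)] at he; simp at he
      · rw [hj (i'' + 1) (by omega)] at ht; simp at ht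
  -- at each time ≥ i there is an eating neighbour
  have hneigh : ∀ i' ≥ i, ∃ m, E j m ∧ A i' m = Act.e := by
    intro i' hi'
    by_contra hno
    push_neg at hno
    have hr : ready E (Ds i') (A i') j :=
      ⟨hj i' hi', htop' i' hi', fun k hk => hno k hk⟩
    have he : A (i' + 1) j = Act.e := by
      rw [hAstep i']
      exact step_h_ready E (Ds i') (A i') (b i') j (hj i' hi') hr
    rw [hj (i' + 1) (by omega)] at he; simp at he
  -- remaining eating time
  let w : ℕ → Fin N → ℕ := fun i' m =>
    if hc : A i' m = Act.e then Nat.find (hfin m i' hc) - i' else 0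
  have hwpos : ∀ i' m, A i' m = Act.e → 0 < w i' m := by
    intro i' m hc
    have h1 := (Nat.find_spec (hfin m i' hc)).1
    simp only [w, dif_pos hc]
    omega
  have hwdec : ∀ i' m, A i' m = Act.e → A (i' + 1) m = Act.e →
      w (i' + 1) m < w i' m := by
    intro i' m hc hc'
    have h1 := Nat.find_spec (hfin m i' hc)
    have h2 := Nat.find_spec (hfin m (i' + 1) hc')
    set F := Nat.find (hfin m i' hc) with hF
    set F' := Nat.find (hfin m (i' + 1) hc') with hF'
    have hFne : F ≠ i' + 1 := by
      intro h; rw [h] at h1; exact h1.2 hc'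
    have hFgt : F > i' + 1 := by rcases h1 with ⟨h1a, _⟩; omega
    have hle1 : F' ≤ F := Nat.find_le ⟨hFgt, h1.2⟩
    have hle2 : F ≤ F' := Nat.find_le ⟨by omega, h2.2⟩
    have hEq : F = F' := le_antisymm hle2 hle1
    simp only [w, dif_pos hc, dif_pos hc', ← hF, ← hF', ← hEq]
    omega
  -- eating neighbours finset
  let T : ℕ → Finset (Fin N) := fun i' =>
    Finset.univ.filter (fun m => E j m ∧ A i' m = Act.e)
  have hTsub : ∀ i' ≥ i, T (i' + 1) ⊆ T i' := by
    intro i' hi' m hm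
    simp only [T, Finset.mem_filter, Finset.mem_univ, true_and] at hm ⊢
    refine ⟨hm.1, ?_⟩
    have hm2 := hm.2
    rw [hAstep i'] at hm2
    rcases eat_src E (Ds i') (A i') (b i') m hm2 with h | ⟨_, _, hmt, _⟩
    · exact h
    · exfalso
      have h1 : Ds i' m j := hmt j (hE_symm j m hm.1)
      have h2 : Ds i' j m := htop' i' hi' m hm.1
      exact ((hinv i').1.2 j m hm.1).1 h2 h1
  let W : ℕ → ℕ := fun i' => (T i').sum (fun m => w i' m)
  have hWdec : ∀ i' ≥ i, W (i' + 1) < W i' := by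
    intro i' hi'
    obtain ⟨m, hEm, hme⟩ := hneigh i' hi'
    have hmT : m ∈ T i' := by
      simp only [T, Finset.mem_filter, Finset.mem_univ, true_and]; exact ⟨hEm, hme⟩
    have hWpos : 0 < W i' :=
      lt_of_lt_of_le (hwpos i' m hme)
        (Finset.single_le_sum (fun k _ => Nat.zero_le _) hmT)
    rcases Finset.eq_empty_or_nonempty (T (i' + 1)) with hemp | hne
    · simpa [W, hemp] using hWpos
    · have hstep1 : (T (i' + 1)).sum (fun m => w (i' + 1) m) <
          (T (i' + 1)).sum (fun m => w i' m) := by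
        refine Finset.sum_lt_sum_of_nonempty hne ?_
        intro k hk
        have hk' := hTsub i' hi' hk
        simp only [T, Finset.mem_filter, Finset.mem_univ, true_and] at hk hk'
        exact hwdec i' k hk'.2 hk.2
      have hstep2 : (T (i' + 1)).sum (fun m => w i' m) ≤
          (T i').sum (fun m => w i' m) :=
        Finset.sum_le_sum_of_subset (hTsub i' hi')
      exact lt_of_lt_of_le hstep1 hstep2
  -- infinite descent
  have hdesc : ∀ s, W (i + s) + s ≤ W i := by
    intro s
    induction s with
    | zero => simp
    | succ s ih =>
      have := hWdec (i + s) (by omega)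
      have h2 : W (i + (s + 1)) < W (i + s) := by
        have : i + (s + 1) = (i + s) + 1 := by omega
        rw [this]; exact hWdec (i + s) (by omega)
      omega
  have := hdesc (W i + 1)
  omega

include hE_irr hE_symm hA0 hD0 hAstep hDstep hfin in
lemma starve_step (i : ℕ) (j : Fin N) (hj : ∀ i' ≥ i, A i' j = Act.h) :
    ∃ (k : Fin N) (i₀ : ℕ), (∀ i' ≥ i₀, A i' k = Act.h) ∧ (∀ i' ≥ i₀, Ds i' k j) := by
  classical
  have hinv := invariants hE_irr hE_symm hA0 hD0 hAstep hDstep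
  -- the set of dominators of j is non-increasing
  have hmono1 : ∀ i' ≥ i, ∀ k, Ds (i' + 1) k j → Ds i' k j := by
    intro i' hi' k hk
    rw [hDstep i'] at hk
    rcases hk with ⟨h, _⟩ | ⟨_, hC⟩
    · exact h
    · exfalso
      rcases hC with he | ⟨ht, _⟩
      · rw [hj (i' + 1) (by omega)] at he; simp at he
      · rw [hj (i' + 1) (by omega)] at ht; simp at ht
  have hmono : ∀ i1 i2, i ≤ i1 → i1 ≤ i2 → ∀ k, Ds i2 k j → Ds i1 k j := by
    intro i1 i2 h1 h2
    induction i2, h2 using Nat.le_induction with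
    | base => exact fun k hk => hk
    | succ i2' h2' ih =>
      intro k hk
      exact ih k (hmono1 i2' (by omega) k hk)
  -- stabilization via minimal cardinality
  let S : ℕ → Set (Fin N) := fun i' => {k | Ds i' k j}
  let f : ℕ → ℕ := fun s => (S (i + s)).ncard
  have hfanti : ∀ s1 s2, s1 ≤ s2 → f s2 ≤ f s1 := by
    intro s1 s2 hs
    exact Set.ncard_le_ncard (fun k hk => hmono (i + s1) (i + s2) (by omega) (by omega) k hk)
      (Set.toFinite _)
  obtain ⟨s₀, hs₀⟩ : ∃ s₀, f s₀ = sInf (Set.range f) :=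
    Nat.sInf_mem (Set.range_nonempty f)
  have hstable : ∀ s ≥ s₀, S (i + s) = S (i + s₀) := by
    intro s hs
    refine Set.eq_of_subset_of_ncard_le
      (fun k hk => hmono (i + s₀) (i + s) (by omega) (by omega) k hk) ?_ (Set.toFinite _)
    have h1 : f s ≤ f s₀ := hfanti s₀ s hs
    have h2 : f s₀ ≤ f s := hs₀ ▸ Nat.sInf_le ⟨s, rfl⟩
    exact le_of_eq (le_antisymm h2 h1)
  set i₀ := i + s₀ with hi₀
  rcases Set.eq_empty_or_nonempty (S i₀) with hemp | ⟨k, hk⟩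
  · -- j is top at i₀ : contradiction via top_no_starve
    exfalso
    have htop : topD E (Ds i₀) j := by
      intro m hEm
      have hnm : ¬ Ds i₀ m j := by
        intro h
        exact Set.eq_empty_iff_forall_notMem.1 hemp m h
      exact ((hinv i₀).1.2 j m hEm).2 hnm
    exact top_no_starve hE_irr hE_symm hA0 hD0 hAstep hDstep hfin i₀ j
      (fun i' hi' => hj i' (by omega)) htop
  · -- k is a dominator forever, and is hungry forever
    have hDkj : ∀ i' ≥ i₀, Ds i' k j := by
      intro i' hi'
      have hs : i' = i + (s₀ + (i' - i₀)) := by omega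
      have h6 := hstable (s₀ + (i' - i₀)) (by omega)
      have h5 : k ∈ S (i + (s₀ + (i' - i₀))) := by rw [h6]; exact hk
      rw [hs]
      exact h5
    have hnot_t : ∀ i' ≥ i₀, A i' k ≠ Act.t := by
      intro i' hi' ht
      have hEkj : E k j := (hinv i').1.1 k j (hDkj i' hi')
      have hEjk : E j k := hE_symm k j hEkj
      have h1 : Ds i' j k := (hinv i').2.2.2.2 j k (hj i' (by omega)) ht hEjk
      exact ((hinv i').1.2 j k hEjk).1 h1 (hDkj i' hi')
    have hnot_e : ∀ i' ≥ i₀, A i' k ≠ Act.e := by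
      intro i' hi' he
      obtain ⟨i'', hi'', ht⟩ := eater_exits hAstep hfin i' k he
      exact hnot_t i'' (by omega) ht
    refine ⟨k, i₀, ?_, hDkj⟩
    intro i' hi'
    rcases hak : A i' k with h | h | h
    · exact absurd hak (hnot_t i' hi')
    · rfl
    · exact absurd hak (hnot_e i' hi')

include hE_irr hE_symm hA0 hD0 hAstep hDstep hfin in
lemma no_starver (j : Fin N) (i : ℕ) (hj : ∀ i' ≥ i, A i' j = Act.h) : False := by
  classical
  have hinv := invariants hE_irr hE_symm hA0 hD0 hAstep hDstep
  let B : Set (Fin N) := {x | ∃ m, ∀ i' ≥ m, A i' x = Act.h}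
  have hB : j ∈ B := ⟨i, hj⟩
  have hstep : ∀ x : B, ∃ y : B, ∃ i₀, ∀ i' ≥ i₀, Ds i' y.1 x.1 := by
    rintro ⟨x, m, hm⟩
    obtain ⟨k, i₀, hk1, hk2⟩ :=
      starve_step hE_irr hE_symm hA0 hD0 hAstep hDstep hfin m x hm
    exact ⟨⟨k, ⟨i₀, hk1⟩⟩, i₀, hk2⟩
  choose φ I hI using hstep
  let c : ℕ → B := fun n => φ^[n] ⟨j, hB⟩
  have hc : ∀ n, c (n + 1) = φ (c n) := fun n => Function.iterate_succ_apply' φ n _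
  have hedge : ∀ n, ∀ i' ≥ I (c n), Ds i' (c (n + 1)).1 (c n).1 := by
    intro n i' hi'
    rw [hc n]
    exact hI (c n) i' hi'
  obtain ⟨m1, m2, hne, heq⟩ := Finite.exists_ne_map_eq_of_infinite c
  -- wlog m1 < m2
  obtain ⟨mA, mB, hlt, heq'⟩ : ∃ mA mB, mA < mB ∧ c mA = c mB := by
    rcases lt_or_gt_of_ne hne with h | h
    · exact ⟨m1, m2, h, heq⟩
    · exact ⟨m2, m1, h, heq.symm⟩
  let istar := (Finset.range mB).sup (fun n => I (c n))
  have hedge' : ∀ n < mB, Ds istar (c (n + 1)).1 (c n).1 := by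
    intro n hn
    exact hedge n istar (Finset.le_sup (f := fun n => I (c n)) (Finset.mem_range.2 hn))
  have htg : ∀ d, mA + d + 1 ≤ mB →
      Relation.TransGen (Ds istar) (c (mA + d + 1)).1 (c mA).1 := by
    intro d
    induction d with
    | zero =>
      intro hd
      exact Relation.TransGen.single (hedge' mA (by omega))
    | succ d ih =>
      intro hd
      have h1 : Ds istar (c (mA + d + 1 + 1)).1 (c (mA + d + 1)).1 :=
        hedge' (mA + d + 1) (by omega)
      have h2 := ih (by omega)
      have h3 : mA + (d + 1) + 1 = mA + d + 1 + 1 := by omega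
      rw [h3]
      exact Relation.TransGen.head h1 h2
  have hfin2 : mA + (mB - mA - 1) + 1 = mB := by omega
  have h4 := htg (mB - mA - 1) (by omega)
  rw [hfin2, ← heq'] at h4
  exact (hinv istar).2.1 (c mA).1 h4

end Main
end SF

theorem starvation_freedom {N : ℕ} (E : Fin N → Fin N → Prop)
    (hE_irr : ∀ j, ¬ E j j) (hE_symm : ∀ j k, E j k → E k j)
    (A : ℕ → Fin N → Act) (Ds : ℕ → Fin N → Fin N → Prop) (b : ℕ → Fin N → Bool)
    (hA0 : ∀ j, A 0 j = Act.t)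
    (hD0 : ∀ j k, Ds 0 j k ↔ (E j k ∧ k < j))
    (hAstep : ∀ i, A (i + 1) = nextA E (Ds i) (A i) (b i))
    (hDstep : ∀ i, Ds (i + 1) = dH (Ds i) (A (i + 1)))
    (hfinite_eating : ∀ (j : Fin N) (i : ℕ), A i j = Act.e → ∃ i' > i, A i' j ≠ Act.e) :
    ∀ (j : Fin N) (i : ℕ), A i j = Act.h → ∃ i' > i, A i' j = Act.e := by
  intro j i hj
  by_contra hcon
  push_neg at hcon
  have hne : ∀ i' > i, A i' j ≠ Act.e := fun i' hi' he => by
    have := hcon i' hi'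
    exact this he
  have hall := SF.hungry_persists hAstep i j hj hne
  exact (SF.no_starver hE_irr hE_symm hA0 hD0 hAstep hDstep hfinite_eating j i hall).elim
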